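/- Let E be a complex Hilbert space, M ∈ ℕ, let G : Fin (M+1) → Type be a finite family of complex Hilbert spaces, and let V : Π n, (G n →ₗᵢ[ℂ] E) be a family of linear isometries. Let N : E →ₗ.[ℂ] E be a symmetric densely defined unbounded operator (LinearPMap with N.IsSymmetric) such that for every n : Fin (M+1) the range of V n equals the eigenspace {x : E | ∃ hx : x ∈ N.domain, N ⟨x, hx⟩ = ((n : ℕ) : ℂ) • x} of N, and assume that the closed linear span of ⋃ₙ Set.range (V n) is all of E. Then the map x ↦ (fun n => ((V n).toContinuousLinearMap).adjoint x) defines a linear isometric equivalence E ≃ₗᵢ[ℂ] PiLp 2 G; in particular E is the finite Hilbert space direct sum ⊕_{n=0}^{M} G n. -/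

import Mathlib

open scoped ComplexInnerProductSpace

/-- A densely defined (in general unbounded) operator `N` is symmetric if
`⟪N x, y⟫ = ⟪x, N y⟫` for all `x, y` in its domain. -/
def LinearPMap.IsSymmetric {H : Type*} [NormedAddCommGroup H] [InnerProductSpace ℂ H]
    (N : H →ₗ.[ℂ] H) : Prop :=
  ∀ x y : N.domain, ⟪N x, (y : H)⟫ = ⟪(x : H), N y⟫

theorem stmt_14 {E : Type*} [NormedAddCommGroup E] [InnerProductSpace ℂ E] [CompleteSpace E]
    (M : ℕ) (G : Fin (M + 1) → Type*) [∀ n, NormedAddCommGroup (G n)]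
    [∀ n, InnerProductSpace ℂ (G n)] [∀ n, CompleteSpace (G n)]
    (V : ∀ n, G n →ₗᵢ[ℂ] E)
    (N : E →ₗ.[ℂ] E) (hdense : Dense (N.domain : Set E)) (hN : N.IsSymmetric)
    (heig : ∀ n : Fin (M + 1), Set.range (V n) =
      {x : E | ∃ hx : x ∈ N.domain, N ⟨x, hx⟩ = ((n : ℕ) : ℂ) • x})
    (hspan : (Submodule.span ℂ (⋃ n, Set.range (V n))).topologicalClosure = ⊤) :
    ∃ Φ : E ≃ₗᵢ[ℂ] PiLp 2 G, ∀ (x : E) (n : Fin (M + 1)),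
      (Φ x : ∀ n, G n) n = ContinuousLinearMap.adjoint (V n).toContinuousLinearMap x := by
  classical
  have hmem : ∀ (n : Fin (M + 1)) (v : G n), ∃ hx : V n v ∈ N.domain,
      N ⟨V n v, hx⟩ = ((n : ℕ) : ℂ) • V n v := by
    intro n v
    have : V n v ∈ Set.range (V n) := ⟨v, rfl⟩
    rwa [heig n] at this
  have hortho : OrthogonalFamily ℂ G V := by
    intro m n hmn v w
    obtain ⟨hm, hNm⟩ := hmem m v
    obtain ⟨hn, hNn⟩ := hmem n w
    have h := hN ⟨V m v, hm⟩ ⟨V n w, hn⟩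
    rw [hNm, hNn] at h
    simp only [inner_smul_left, inner_smul_right, Complex.conj_natCast] at h
    have hcast : ((m : ℕ) : ℂ) ≠ ((n : ℕ) : ℂ) := by
      exact_mod_cast fun hc => hmn (Fin.ext (by exact_mod_cast hc))
    have : (((m : ℕ) : ℂ) - ((n : ℕ) : ℂ)) * ⟪V m v, V n w⟫ = 0 := by
      rw [sub_mul, h, sub_self]
    rcases mul_eq_zero.mp this with h0 | h0
    · exact absurd (sub_eq_zero.mp h0) hcast
    · exact h0
  -- The summing map as a linear map
  let T : (∀ n, G n) →ₗ[ℂ] E :=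
    ∑ n : Fin (M + 1), (V n).toLinearMap.comp (LinearMap.proj n)
  have hT : ∀ f : ∀ n, G n, T f = ∑ n, V n (f n) := by
    intro f
    simp [T, LinearMap.sum_apply]
  have hnorm : ∀ f : PiLp 2 G, ‖T f‖ = ‖f‖ := by
    intro f
    have h1 : ‖T f‖ ^ 2 = ∑ n, ‖f n‖ ^ 2 := by
      rw [hT]; exact hortho.norm_sum f Finset.univ
    have h2 : ‖f‖ ^ 2 = ∑ n, ‖f n‖ ^ 2 := PiLp.norm_sq_eq_of_L2 G f
    have := h1.trans h2.symm
    nlinarith [norm_nonneg (T f), norm_nonneg f]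
  haveI hcs : CompleteSpace (PiLp 2 G) := inferInstance
  let L : PiLp 2 G →ₗᵢ[ℂ] E := ⟨T.comp (WithLp.linearEquiv 2 ℂ (∀ n, G n)).toLinearMap, hnorm⟩
  have hLapply : ∀ f : PiLp 2 G, L f = ∑ n, V n (f n) := fun f => hT _
  -- surjectivity
  have hsurj : Function.Surjective L := by
    have hclosed : IsClosed (Set.range L) :=
      (L.isometry.isClosedEmbedding).isClosed_range
    have hrange : (Submodule.span ℂ (⋃ n, Set.range (V n))) ≤ LinearMap.range L.toLinearMap := by
      apply Submodule.span_le.mpr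
      rintro x hx
      simp only [Set.mem_iUnion, Set.mem_range] at hx
      obtain ⟨n, v, rfl⟩ := hx
      refine ⟨WithLp.toLp 2 (Pi.single n v), ?_⟩
      show T (Pi.single n v) = V n v
      rw [hT]
      rw [Fintype.sum_eq_single n]
      · simp
      · intro m hmn; simp [Pi.single_eq_of_ne hmn]
    have hclosed' : IsClosed ((LinearMap.range L.toLinearMap : Submodule ℂ E) : Set E) := by
      rw [LinearMap.coe_range]; exact hclosed
    have htop : (⊤ : Submodule ℂ E) ≤ LinearMap.range L.toLinearMap := by
      rw [← hspan]
      exact Submodule.topologicalClosure_minimal _ hrange hclosed'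
    intro x
    exact htop (Submodule.mem_top (x := x))
  let Φ := (LinearIsometryEquiv.ofSurjective L hsurj).symm
  refine ⟨Φ, fun x n => ?_⟩
  have hx : L (Φ x) = x :=
    (LinearIsometryEquiv.ofSurjective L hsurj).apply_symm_apply x
  apply ext_inner_right ℂ
  intro v
  have h1 : ⟪(ContinuousLinearMap.adjoint (V n).toContinuousLinearMap) x, v⟫
      = ⟪x, V n v⟫ := by
    rw [ContinuousLinearMap.adjoint_inner_left]
    rfl
  have h2 : ⟪x, V n v⟫ = ⟪(Φ x : ∀ n, G n) n, v⟫ := by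
    conv_lhs => rw [← hx]
    rw [hLapply, ← inner_conj_symm,
      hortho.inner_right_fintype (Φ x : ∀ n, G n) n v, inner_conj_symm]
  rw [h1]
  exact h2.symm
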